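/- Let ℓ be a loss function bounded in [0,1], let G be a finite set of groups, let H be a hypothesis class, and let fₜ be the decision lists produced by the Prepend algorithm on a training set of size n with error function εₙ : G → ℝ₊. If every g ∈ G satisfies Pₙ(g)·εₙ(g) ≥ ε₀ > 0 and min_{h∈H} Lₙ(h) ≤ α, then the algorithm terminates after at most α/ε₀ prepending rounds, and the output f satisfies Lₙ(f | g) ≤ inf_{h∈H} Lₙ(h | g) + εₙ(g) for all g ∈ G. -/
import Mathlib


/-- Number of training examples falling in group `g`. -/
def cntG {X Y : Type*} (n : ℕ) (x : Fin n → X) (_y : Fin n → Y) (g : X → Bool) : ℕ :=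
  (Finset.univ.filter fun i => g (x i) = true).card

/-- Empirical risk. -/
noncomputable def empLoss {X Y Z : Type*} (n : ℕ) (x : Fin n → X) (y : Fin n → Y)
    (ℓ : Z → Y → ℝ) (f : X → Z) : ℝ :=
  (1 / (n : ℝ)) * ∑ i, ℓ (f (x i)) (y i)

/-- Empirical conditional risk on group `g`. -/
noncomputable def empCondLoss {X Y Z : Type*} (n : ℕ) (x : Fin n → X) (y : Fin n → Y)
    (ℓ : Z → Y → ℝ) (f : X → Z) (g : X → Bool) : ℝ :=
  (1 / (cntG n x y g : ℝ)) * ∑ i, if g (x i) then ℓ (f (x i)) (y i) else 0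

/-- Lemma on the Prepend algorithm: if every group has `Pₙ(g) · εₙ(g) ≥ ε₀` and the
initial hypothesis has empirical risk at most `α`, then the algorithm stops after at
most `α / ε₀` prepending rounds and the output satisfies the multi-group guarantee. -/
theorem stmt_6 {X Y Z : Type*} (n : ℕ) (x : Fin n → X) (y : Fin n → Y)
    (ℓ : Z → Y → ℝ) (hℓ : ∀ z yy, ℓ z yy ∈ Set.Icc (0 : ℝ) 1)
    (G : Set (X → Bool)) (H : Set (X → Z)) (εn : (X → Bool) → ℝ) (ε₀ α : ℝ)
    (hε₀ : 0 < ε₀)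
    (hmass : ∀ g ∈ G, ((cntG n x y g : ℝ) / n) * εn g ≥ ε₀)
    (T : ℕ) (f : ℕ → X → Z)
    (hf0 : f 0 ∈ H)
    (hf0min : ∀ h ∈ H, empLoss n x y ℓ (f 0) ≤ empLoss n x y ℓ h)
    (hα : empLoss n x y ℓ (f 0) ≤ α)
    (hstep : ∀ t < T, ∃ g ∈ G, ∃ h ∈ H,
      empCondLoss n x y ℓ (f t) g - empCondLoss n x y ℓ h g ≥ εn g ∧
      f (t + 1) = fun xx => if g xx then h xx else f t xx)
    (hterm : ∀ g ∈ G, ∀ h ∈ H,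
      empCondLoss n x y ℓ (f T) g - empCondLoss n x y ℓ h g < εn g) :
    (T : ℝ) ≤ α / ε₀ ∧
      ∀ g ∈ G, ∀ h ∈ H,
        empCondLoss n x y ℓ (f T) g ≤ empCondLoss n x y ℓ h g + εn g := by

  have hnn : ∀ fz : X → Z, 0 ≤ empLoss n x y ℓ fz := by
    intro fz
    apply mul_nonneg (by positivity)
    exact Finset.sum_nonneg fun i _ => (hℓ _ _).1
  constructor
  · -- termination bound
    have key : ∀ t < T, empLoss n x y ℓ (f (t+1)) ≤ empLoss n x y ℓ (f t) - ε₀ := by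
      intro t ht
      obtain ⟨g, hg, h, hh, hdiff, hfeq⟩ := hstep t ht
      have hmg := hmass g hg
      have hc : (0:ℝ) < (cntG n x y g : ℝ) := by
        rcases lt_or_ge 0 ((cntG n x y g : ℝ)) with h' | h'
        · exact h'
        · have : ((cntG n x y g : ℝ)) = 0 := le_antisymm h' (Nat.cast_nonneg _)
          rw [this] at hmg; simp at hmg; linarith
      have hn : (0:ℝ) < (n : ℝ) := by
        rcases lt_or_ge 0 ((n : ℝ)) with h' | h'
        · exact h'
        · have : ((n : ℝ)) = 0 := le_antisymm h' (Nat.cast_nonneg _)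
          rw [this, div_zero, zero_mul] at hmg; linarith
      set S := ∑ i, (if g (x i) then ℓ (f t (x i)) (y i) - ℓ (h (x i)) (y i) else 0) with hS
      have hb : empCondLoss n x y ℓ (f t) g - empCondLoss n x y ℓ h g
          = (1/(cntG n x y g : ℝ)) * S := by
        unfold empCondLoss
        rw [← mul_sub, ← Finset.sum_sub_distrib, hS]
        congr 1
        apply Finset.sum_congr rfl
        intro i _
        by_cases hgi : g (x i) <;> simp [hgi]
      have ha : empLoss n x y ℓ (f (t+1)) = empLoss n x y ℓ (f t) - (1/(n:ℝ)) * S := by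
        unfold empLoss
        rw [← mul_sub, ← Finset.sum_sub_distrib]
        congr 1
        apply Finset.sum_congr rfl
        intro i _
        rw [hfeq]
        by_cases hgi : g (x i) <;> simp [hgi]
      have h1 : (cntG n x y g : ℝ) * εn g ≤ S := by
        have hd : εn g ≤ (1/(cntG n x y g : ℝ)) * S := by rw [← hb]; exact hdiff
        calc (cntG n x y g : ℝ) * εn g
            ≤ (cntG n x y g : ℝ) * ((1/(cntG n x y g : ℝ)) * S) :=
              mul_le_mul_of_nonneg_left hd hc.le
          _ = S := by field_simp
      have h2 : ε₀ ≤ (1/(n:ℝ)) * S := by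
        calc ε₀ ≤ ((cntG n x y g : ℝ) / n) * εn g := hmg
          _ = (1/(n:ℝ)) * ((cntG n x y g : ℝ) * εn g) := by ring
          _ ≤ (1/(n:ℝ)) * S := mul_le_mul_of_nonneg_left h1 (by positivity)
      linarith [ha]
    have ind : ∀ t, t ≤ T → empLoss n x y ℓ (f t) ≤ empLoss n x y ℓ (f 0) - t * ε₀ := by
      intro t
      induction t with
      | zero => intro _; simp
      | succ k ih =>
        intro hk
        have hk' : k < T := hk
        have h1 := key k hk'
        have h2 := ih (le_of_lt hk')
        push_cast
        linarith
    have hT' := ind T le_rfl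
    have h0 := hnn (f T)
    rw [le_div_iff₀ hε₀]
    linarith
  · intro g hg h hh
    linarith [hterm g hg h hh]
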